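/- Let s ≥ 2 and a = (a_1, …, a_s) ∈ ℤ_{≥1}^s with a_1 > a_j for all 2 ≤ j ≤ s and gcd(a_1, a_2) = 1. Then for every j ≥ 0 there exists N ≥ s such that for all d, d' ≥ N, the coefficient of X^j in (1−X)^{d+1}·Ehr_{P(a;d)}(X) equals the coefficient of X^j in (1−X)^{d'+1}·Ehr_{P(a;d')}(X). That is, the h*-polynomials of the multidiagonal simplices P(a;d) converge coefficientwise in ℤ[[X]] as d → ∞. -/

import Mathlib

open scoped BigOperators Pointwise

/-- Ehrhart series of a (bounded) set `P ⊆ ℝ^n`: the coefficient of `X^t` is the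
number of lattice points of `ℤ^n` in the dilate `t • P`. -/
noncomputable def ehrhartSeries {n : ℕ} (P : Set (Fin n → ℝ)) : PowerSeries ℤ :=
  PowerSeries.mk fun t =>
    (Set.ncard {x : Fin n → ℤ | (fun i => (x i : ℝ)) ∈ (t : ℝ) • P} : ℤ)

/-- Vertices of the multidiagonal simplex `P(a; d) ⊆ ℝ^d`:
`w_0 = 0` and `w_c = ∑_{i=1}^{min(s,c)} a_i e_{c+1-i}` for `1 ≤ c ≤ d`
(coordinates are 0-indexed, so `e_t` is the indicator of index `t-1`). -/
def Wvert (s : ℕ) (a : Fin s → ℕ) (d : ℕ) : Fin (d + 1) → Fin d → ℝ := fun c p =>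
  if h : (p : ℕ) < (c : ℕ) ∧ (c : ℕ) - (p : ℕ) ≤ s then
    (a ⟨(c : ℕ) - (p : ℕ) - 1, by omega⟩ : ℝ)
  else 0

namespace MD

open Finset

variable (s : ℕ) (a : Fin s → ℕ)

/-- The coefficient sequence, as a function on `ℕ`: `aa i = a_i` for `1 ≤ i ≤ s`, else `0`. -/
def aa (i : ℕ) : ℕ := if h : 1 ≤ i ∧ i ≤ s then a ⟨i - 1, by omega⟩ else 0

/-- The window sum `Σ_{i=1}^s a_i μ(p+i)`. -/
noncomputable def Yw (μ : ℕ → ℝ) (p : ℕ) : ℝ :=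
  ∑ i ∈ Finset.Icc 1 s, (aa s a i : ℝ) * μ (p + i)

/-- support condition: `μ` vanishes at `0` and above `d`. -/
def Spt (d : ℕ) (μ : ℕ → ℝ) : Prop := ∀ c : ℕ, c = 0 ∨ d < c → μ c = 0

/-- `r` is an integer. -/
def IsZ (r : ℝ) : Prop := ∃ z : ℤ, r = (z : ℝ)

/-- fractional solutions -/
def Fset (d : ℕ) : Set (ℕ → ℝ) :=
  {l | Spt d l ∧ (∀ c, 0 ≤ l c ∧ l c < 1) ∧ ∀ p, IsZ (Yw s a l p)}

/-- the height of a fractional solution -/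
noncomputable def mht (d : ℕ) (l : ℕ → ℝ) : ℕ := (⌈∑ c ∈ Finset.Icc 1 d, l c⌉).toNat

/-- all solutions at dilation `t` -/
def Solset (d t : ℕ) : Set (ℕ → ℝ) :=
  {μ | Spt d μ ∧ (∀ c, 0 ≤ μ c) ∧ (∑ c ∈ Finset.Icc 1 d, μ c) ≤ (t : ℝ) ∧
    ∀ p, IsZ (Yw s a μ p)}

/-- the parametrized `t`-dilate of the simplex -/
def Cset (d : ℕ) (t : ℝ) : Set (Fin d → ℝ) :=
  {x | ∃ μ : ℕ → ℝ, Spt d μ ∧ (∀ c, 0 ≤ μ c) ∧ (∑ c ∈ Finset.Icc 1 d, μ c) ≤ t ∧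
    ∀ p : Fin d, x p = Yw s a μ (p : ℕ)}

/-- nonneg integer vectors supported in `[1,d]` with coordinate sum at most `m` -/
def NSetN (d m : ℕ) : Set (ℕ → ℕ) :=
  {n | (∀ c : ℕ, c = 0 ∨ d < c → n c = 0) ∧ (∑ c ∈ Finset.Icc 1 d, n c) ≤ m}

lemma sum_shift {M : Type*} [AddCommMonoid M] (f : ℕ → M) (x y p : ℕ) :
    ∑ c ∈ Finset.Icc (p + x) (p + y), f c = ∑ i ∈ Finset.Icc x y, f (p + i) := by
  rw [← Finset.map_add_left_Icc, Finset.sum_map]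
  simp [addLeftEmbedding_apply]

lemma sum_Icc_one {M : Type*} [AddCommMonoid M] (f : ℕ → M) (d : ℕ) :
    ∑ c ∈ Finset.Icc 1 d, f c = ∑ c : Fin d, f ((c : ℕ) + 1) := by
  induction d with
  | zero => simp
  | succ n ih =>
      rw [Finset.sum_Icc_succ_top (by omega), ih, Fin.sum_univ_castSucc]
      simp

lemma aa_one (hs : 1 ≤ s) : aa s a 1 = a ⟨0, by omega⟩ := by
  simp [aa, hs]

lemma aa_two (hs : 2 ≤ s) : aa s a 2 = a ⟨1, hs⟩ := by
  simp [aa, hs]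

lemma aa_zero_of (i : ℕ) (h : i = 0 ∨ s < i) : aa s a i = 0 := by
  unfold aa; rw [dif_neg]; omega

lemma Wvert_eq (d : ℕ) (C : Fin (d + 1)) (P : Fin d) :
    Wvert s a d C P = (aa s a ((C : ℕ) - (P : ℕ)) : ℝ) := by
  unfold Wvert aa
  by_cases h : (P : ℕ) < (C : ℕ) ∧ (C : ℕ) - (P : ℕ) ≤ s
  · rw [dif_pos h, dif_pos (by omega)]
  · rw [dif_neg h, dif_neg (by omega)]
    simp

section YwLemmas

lemma Yw_add (μ ν : ℕ → ℝ) (p : ℕ) :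
    Yw s a (fun c => μ c + ν c) p = Yw s a μ p + Yw s a ν p := by
  simp [Yw, mul_add, Finset.sum_add_distrib]

lemma Yw_sub (μ ν : ℕ → ℝ) (p : ℕ) :
    Yw s a (fun c => μ c - ν c) p = Yw s a μ p - Yw s a ν p := by
  simp [Yw, mul_sub, Finset.sum_sub_distrib]

lemma Yw_smul (r : ℝ) (μ : ℕ → ℝ) (p : ℕ) :
    Yw s a (fun c => r * μ c) p = r * Yw s a μ p := by
  simp [Yw, Finset.mul_sum]; apply Finset.sum_congr rfl; intros; ring

lemma Yw_zero (p : ℕ) : Yw s a (fun _ => 0) p = 0 := by simp [Yw]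

lemma Yw_combo (α β : ℝ) (μ ν : ℕ → ℝ) (p : ℕ) :
    Yw s a (fun c => α * μ c + β * ν c) p = α * Yw s a μ p + β * Yw s a ν p := by
  unfold Yw
  rw [Finset.mul_sum, Finset.mul_sum, ← Finset.sum_add_distrib]
  refine Finset.sum_congr rfl fun i _ => by ring

lemma Yw_nonneg {μ : ℕ → ℝ} (hμ : ∀ c, 0 ≤ μ c) (p : ℕ) : 0 ≤ Yw s a μ p := by
  apply Finset.sum_nonneg
  intro i _
  exact mul_nonneg (by positivity) (hμ _)

lemma Yw_nat (n : ℕ → ℕ) (p : ℕ) : IsZ (Yw s a (fun c => (n c : ℝ)) p) := by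
  refine ⟨∑ i ∈ Finset.Icc 1 s, (aa s a i : ℤ) * n (p + i), ?_⟩
  unfold Yw; push_cast; ring

lemma Yw_int (z : ℕ → ℤ) (p : ℕ) : IsZ (Yw s a (fun c => ((z c : ℤ) : ℝ)) p) := by
  refine ⟨∑ i ∈ Finset.Icc 1 s, (aa s a i : ℤ) * z (p + i), ?_⟩
  unfold Yw; push_cast; ring

lemma IsZ_sub {x y : ℝ} (hx : IsZ x) (hy : IsZ y) : IsZ (x - y) := by
  obtain ⟨zx, rfl⟩ := hx; obtain ⟨zy, rfl⟩ := hy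
  exact ⟨zx - zy, by push_cast; ring⟩

lemma IsZ_add {x y : ℝ} (hx : IsZ x) (hy : IsZ y) : IsZ (x + y) := by
  obtain ⟨zx, rfl⟩ := hx; obtain ⟨zy, rfl⟩ := hy
  exact ⟨zx + zy, by push_cast; ring⟩

/-- alternate expression for the window sum, as a sum over `c ∈ [1,d]`. -/
lemma Yw_eq_sum (d : ℕ) {μ : ℕ → ℝ} (hμ : Spt d μ) (p : ℕ) :
    Yw s a μ p = ∑ c ∈ Finset.Icc 1 d, μ c * (aa s a (c - p) : ℝ) := by
  have h1 : Yw s a μ p = ∑ c ∈ Finset.Icc (p + 1) (p + s), μ c * (aa s a (c - p) : ℝ) := by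
    rw [Yw, sum_shift]
    refine Finset.sum_congr rfl fun i hi => ?_
    rw [show p + i - p = i by omega]
    ring
  have e1 : ∑ c ∈ Finset.Icc (p + 1) (p + s), μ c * (aa s a (c - p) : ℝ) =
      ∑ c ∈ Finset.range (p + d + s + 1), μ c * (aa s a (c - p) : ℝ) := by
    apply Finset.sum_subset
    · intro c hc
      rw [Finset.mem_Icc] at hc
      rw [Finset.mem_range]
      omega
    · intro c _ hc
      rw [Finset.mem_Icc] at hc
      rw [aa_zero_of s a (c - p) (by omega)]
      simp
  have e2 : ∑ c ∈ Finset.Icc 1 d, μ c * (aa s a (c - p) : ℝ) =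
      ∑ c ∈ Finset.range (p + d + s + 1), μ c * (aa s a (c - p) : ℝ) := by
    apply Finset.sum_subset
    · intro c hc
      rw [Finset.mem_Icc] at hc
      rw [Finset.mem_range]
      omega
    · intro c _ hc
      rw [Finset.mem_Icc] at hc
      rw [hμ c (by omega)]
      simp
  rw [h1, e1, ← e2]

lemma Yw_top (d : ℕ) {μ : ℕ → ℝ} (hμ : Spt d μ) {p : ℕ} (hp : d ≤ p) :
    Yw s a μ p = 0 := by
  apply Finset.sum_eq_zero
  intro i hi
  rw [Finset.mem_Icc] at hi
  rw [hμ (p + i) (by omega), mul_zero]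

lemma Yw_rightmost (hs : 1 ≤ s) {μ : ℕ → ℝ} {M : ℕ} (hM : 1 ≤ M)
    (h : ∀ c, M < c → μ c = 0) :
    Yw s a μ (M - 1) = (aa s a 1 : ℝ) * μ M := by
  rw [Yw, Finset.sum_eq_single_of_mem 1 (Finset.mem_Icc.mpr ⟨le_rfl, hs⟩)]
  · rw [show M - 1 + 1 = M by omega]
  · intro i hi hne
    rw [Finset.mem_Icc] at hi
    rw [h (M - 1 + i) (by omega), mul_zero]

lemma eq_of_Yw_eq (hs : 1 ≤ s) (ha : 1 ≤ aa s a 1) (d : ℕ) {μ ν : ℕ → ℝ}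
    (hμ : Spt d μ) (hν : Spt d ν) (h : ∀ p, Yw s a μ p = Yw s a ν p) : μ = ν := by
  classical
  by_contra hne
  obtain ⟨c0, hc0⟩ := Function.ne_iff.mp hne
  set T := (Finset.Icc 1 d).filter (fun c => μ c ≠ ν c) with hT
  have hTne : T.Nonempty := by
    refine ⟨c0, ?_⟩
    rw [hT, Finset.mem_filter, Finset.mem_Icc]
    refine ⟨⟨?_, ?_⟩, hc0⟩
    · rcases Nat.eq_zero_or_pos c0 with h0 | h0
      · exact absurd (by rw [hμ c0 (Or.inl h0), hν c0 (Or.inl h0)]) hc0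
      · omega
    · by_contra hgt
      exact hc0 (by rw [hμ c0 (Or.inr (by omega)), hν c0 (Or.inr (by omega))])
  set M := T.max' hTne with hMdef
  have hMT : M ∈ T := T.max'_mem hTne
  rw [hT, Finset.mem_filter, Finset.mem_Icc] at hMT
  have hgt : ∀ c, M < c → μ c - ν c = 0 := by
    intro c hc
    by_cases hcd : c ≤ d
    · by_contra hne2
      have hcT : c ∈ T := by
        rw [hT, Finset.mem_filter, Finset.mem_Icc]
        exact ⟨⟨by omega, hcd⟩, fun hh => hne2 (by rw [hh, sub_self])⟩
      have := T.le_max' c hcT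
      omega
    · rw [hμ c (Or.inr (by omega)), hν c (Or.inr (by omega)), sub_zero]
  have h0 : Yw s a (fun c => μ c - ν c) (M - 1) = 0 := by
    rw [Yw_sub, h, sub_self]
  rw [Yw_rightmost s a hs hMT.1.1 hgt] at h0
  have haa : (aa s a 1 : ℝ) ≠ 0 := Nat.cast_ne_zero.mpr (by omega)
  exact hMT.2 (sub_eq_zero.mp ((mul_eq_zero.mp h0).resolve_left haa))

end YwLemmas

section Hull

lemma hull_eq (hs : 1 ≤ s) (d : ℕ) :
    convexHull ℝ (Set.range (Wvert s a d)) = Cset s a d 1 := by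
  classical
  apply Set.Subset.antisymm
  · apply convexHull_min
    · rintro x ⟨C, rfl⟩
      by_cases hC : (C : ℕ) = 0
      · refine ⟨fun _ => 0, fun c _ => rfl, fun c => le_rfl, by simp, fun p => ?_⟩
        rw [Yw_zero, Wvert_eq, hC, Nat.zero_sub, aa_zero_of s a 0 (Or.inl rfl)]
        simp
      · have hCd : (C : ℕ) ≤ d := Nat.lt_succ_iff.mp C.isLt
        have hmem : (C : ℕ) ∈ Finset.Icc 1 d := Finset.mem_Icc.mpr ⟨by omega, hCd⟩
        refine ⟨fun c => if c = (C : ℕ) then (1 : ℝ) else 0, ?_, ?_, ?_, ?_⟩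
        · intro c hc
          show (if c = (C : ℕ) then (1:ℝ) else 0) = 0
          rw [if_neg (by omega)]
        · intro c
          show (0:ℝ) ≤ if c = (C : ℕ) then (1:ℝ) else 0
          split <;> norm_num
        · rw [Finset.sum_ite_eq' (Finset.Icc 1 d) ((C : ℕ)) (fun _ => (1:ℝ))]
          rw [if_pos hmem]
        · intro p
          rw [Yw_eq_sum s a d (fun c hc => by rw [if_neg (by omega)]) p]
          rw [Finset.sum_eq_single_of_mem ((C : ℕ)) hmem]
          · rw [if_pos rfl, one_mul, Wvert_eq]
          · intro c _ hne
            rw [if_neg hne, zero_mul]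
    · rintro x ⟨μ, hμs, hμn, hμ1, hμc⟩ y ⟨ν, hνs, hνn, hν1, hνc⟩ α β hα hβ hαβ
      refine ⟨fun c => α * μ c + β * ν c, ?_, ?_, ?_, ?_⟩
      · intro c hc
        show α * μ c + β * ν c = 0
        rw [hμs c hc, hνs c hc]
        ring
      · exact fun c => add_nonneg (mul_nonneg hα (hμn c)) (mul_nonneg hβ (hνn c))
      · rw [Finset.sum_add_distrib, ← Finset.mul_sum, ← Finset.mul_sum]
        have h1 : α * (∑ c ∈ Finset.Icc 1 d, μ c) ≤ α * 1 := by
          exact mul_le_mul_of_nonneg_left hμ1 hα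
        have h2 : β * (∑ c ∈ Finset.Icc 1 d, ν c) ≤ β * 1 := by
          exact mul_le_mul_of_nonneg_left hν1 hβ
        linarith
      · intro p
        rw [Yw_combo]
        simp only [Pi.add_apply, Pi.smul_apply, smul_eq_mul]
        rw [hμc p, hνc p]
  · rintro x ⟨μ, hμs, hμn, hμ1, hμc⟩
    have hw0 : (0:ℝ) ≤ 1 - ∑ c ∈ Finset.Icc 1 d, μ c := by linarith
    set w : Fin (d+1) → ℝ :=
      fun C => if (C : ℕ) = 0 then 1 - ∑ c ∈ Finset.Icc 1 d, μ c else μ (C : ℕ) with hw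
    have hwn : ∀ C, 0 ≤ w C := by
      intro C
      rw [hw]
      dsimp only
      split
      · exact hw0
      · exact hμn _
    have hsucc : ∀ i : Fin d, w i.succ = μ ((i : ℕ) + 1) := by
      intro i
      rw [hw]
      simp
    have hws : ∑ C, w C = 1 := by
      rw [Fin.sum_univ_succ, Finset.sum_congr rfl (fun i _ => hsucc i),
        ← sum_Icc_one (fun c => μ c) d]
      have hw00 : w 0 = 1 - ∑ c ∈ Finset.Icc 1 d, μ c := by rw [hw]; simp
      rw [hw00]
      ring
    have hxc : x = ∑ C : Fin (d+1), w C • Wvert s a d C := by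
      funext p
      rw [Finset.sum_apply]
      simp only [Pi.smul_apply, smul_eq_mul]
      rw [hμc p, Yw_eq_sum s a d hμs (p : ℕ), Fin.sum_univ_succ]
      have h0 : w 0 * Wvert s a d 0 p = 0 := by
        rw [Wvert_eq]
        have : ((0 : Fin (d+1)) : ℕ) = 0 := rfl
        rw [this, Nat.zero_sub, aa_zero_of s a 0 (Or.inl rfl)]
        simp
      rw [h0, zero_add, sum_Icc_one (fun c => μ c * (aa s a (c - (p:ℕ)) : ℝ)) d]
      refine Finset.sum_congr rfl fun i _ => ?_
      rw [Wvert_eq, hsucc i]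
      have : ((i.succ : Fin (d+1)) : ℕ) = (i : ℕ) + 1 := by simp
      rw [this]
    rw [hxc]
    exact Convex.sum_mem (convex_convexHull ℝ _) (fun i _ => hwn i) hws
      (fun i _ => subset_convexHull ℝ _ ⟨i, rfl⟩)

lemma smul_Cset (hs : 1 ≤ s) (d t : ℕ) :
    ((t : ℝ) • Cset s a d 1) = Cset s a d (t : ℝ) := by
  rcases Nat.eq_zero_or_pos t with rfl | ht
  · have hne : (Cset s a d 1).Nonempty :=
      ⟨fun _ => 0, ⟨fun _ => 0, fun c _ => rfl, fun c => le_rfl, by simp,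
        fun p => (Yw_zero s a (p : ℕ)).symm⟩⟩
    rw [Nat.cast_zero, Set.zero_smul_set hne]
    apply Set.Subset.antisymm
    · intro x hx
      rw [Set.mem_zero] at hx
      subst hx
      exact ⟨fun _ => 0, fun c _ => rfl, fun c => le_rfl, by simp,
        fun p => (Yw_zero s a (p : ℕ)).symm⟩
    · rintro x ⟨μ, hμs, hμn, hμ0, hμc⟩
      have hz : μ = fun _ => (0:ℝ) := by
        funext c
        by_cases hc : c ∈ Finset.Icc 1 d
        · have hsum0 : ∑ c ∈ Finset.Icc 1 d, μ c = 0 :=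
            le_antisymm hμ0 (Finset.sum_nonneg fun c _ => hμn c)
          exact (Finset.sum_eq_zero_iff_of_nonneg fun c _ => hμn c).mp hsum0 c hc
        · rw [Finset.mem_Icc] at hc
          exact hμs c (by omega)
      rw [Set.mem_zero]
      funext p
      rw [hμc p, hz, Yw_zero]
      rfl
  · have htR : (0:ℝ) < t := by exact_mod_cast ht
    ext x
    rw [Set.mem_smul_set]
    constructor
    · rintro ⟨y, ⟨μ, hμs, hμn, hμ1, hμc⟩, rfl⟩
      refine ⟨fun c => (t : ℝ) * μ c,
        fun c hc => by show (t:ℝ) * μ c = 0; rw [hμs c hc, mul_zero],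
        fun c => mul_nonneg htR.le (hμn c), ?_, ?_⟩
      · rw [← Finset.mul_sum]
        nlinarith [hμ1]
      · intro p
        rw [Pi.smul_apply, smul_eq_mul, hμc p, ← Yw_smul]
    · rintro ⟨μ, hμs, hμn, hμt, hμc⟩
      refine ⟨fun p => (t : ℝ)⁻¹ * x p,
        ⟨fun c => (t : ℝ)⁻¹ * μ c,
          fun c hc => by show ((t:ℝ))⁻¹ * μ c = 0; rw [hμs c hc, mul_zero],
          fun c => mul_nonneg (by positivity) (hμn c), ?_, ?_⟩, ?_⟩
      · rw [← Finset.mul_sum]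
        rw [inv_mul_le_iff₀ htR]
        simpa using hμt
      · intro p
        show (t:ℝ)⁻¹ * x p = _
        rw [hμc p, ← Yw_smul]
      · funext p
        rw [Pi.smul_apply, smul_eq_mul]
        show (t:ℝ) * ((t:ℝ)⁻¹ * x p) = x p
        field_simp

end Hull

section Counting

lemma card_lat (hs : 1 ≤ s) (ha : 1 ≤ aa s a 1) (d t : ℕ) :
    {x : Fin d → ℤ | (fun i => ((x i : ℝ))) ∈ Cset s a d (t : ℝ)}.ncard =
      (Solset s a d t).ncard := by
  rw [← Nat.card_coe_set_eq, ← Nat.card_coe_set_eq]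
  refine (Nat.card_congr (Equiv.ofBijective ?_ ⟨?_, ?_⟩)).symm
  · refine fun μ => ⟨fun p => ⌊Yw s a μ.1 (p : ℕ)⌋, ?_⟩
    obtain ⟨hspt, hnn, hsum, hint⟩ := μ.2
    refine ⟨μ.1, hspt, hnn, hsum, fun p => ?_⟩
    obtain ⟨z, hz⟩ := hint (p : ℕ)
    show ((⌊Yw s a μ.1 ((p : ℕ))⌋ : ℤ) : ℝ) = Yw s a μ.1 ((p : ℕ))
    rw [hz, Int.floor_intCast]
  · rintro ⟨μ, hμ⟩ ⟨ν, hν⟩ h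
    simp only [Subtype.mk.injEq] at h ⊢
    obtain ⟨hμs, _, _, hμi⟩ := hμ
    obtain ⟨hνs, _, _, hνi⟩ := hν
    apply eq_of_Yw_eq s a hs ha d hμs hνs
    intro p
    by_cases hp : p < d
    · have hfl := congrFun h ⟨p, hp⟩
      obtain ⟨zμ, hzμ⟩ := hμi p
      obtain ⟨zν, hzν⟩ := hνi p
      simp only at hfl
      rw [hzμ, hzν] at hfl ⊢
      rw [Int.floor_intCast, Int.floor_intCast] at hfl
      exact_mod_cast hfl
    · rw [Yw_top s a d hμs (by omega), Yw_top s a d hνs (by omega)]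
  · rintro ⟨x, hx⟩
    obtain ⟨μ, hspt, hnn, hsum, hcoord⟩ := hx
    have hint : ∀ p, IsZ (Yw s a μ p) := by
      intro p
      by_cases hp : p < d
      · exact ⟨x ⟨p, hp⟩, (hcoord ⟨p, hp⟩).symm⟩
      · exact ⟨0, by rw [Yw_top s a d hspt (by omega)]; simp⟩
    refine ⟨⟨μ, hspt, hnn, hsum, hint⟩, ?_⟩
    simp only [Subtype.mk.injEq]
    apply Subtype.ext
    funext p
    show ⌊Yw s a μ (p : ℕ)⌋ = x p
    have hxp := hcoord p
    simp only at hxp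
    rw [← hxp]
    exact Int.floor_intCast _

/-- finiteness helper -/
lemma finite_of_spt {X : Type*} (x0 : X) (d : ℕ) (V : Set X) (hV : V.Finite)
    (S : Set (ℕ → X)) (hSV : ∀ f ∈ S, ∀ c, f c ∈ V)
    (hspt : ∀ f ∈ S, ∀ c, (c = 0 ∨ d < c) → f c = x0) : S.Finite := by
  have himg : ((fun (f : ℕ → X) => (fun i : Fin (d+1) => f (i : ℕ))) '' S).Finite := by
    apply Set.Finite.subset (Set.Finite.pi (fun _ : Fin (d+1) => hV))
    rintro g ⟨f, hf, rfl⟩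
    intro i _
    exact hSV f hf _
  apply Set.Finite.of_finite_image himg
  intro f hf g hg h
  funext c
  by_cases hc : c ≤ d
  · exact congrFun h ⟨c, by omega⟩
  · rw [hspt f hf c (by omega), hspt g hg c (by omega)]

lemma ncard_biUnion {α β : Type*} (I : Finset α) (f : α → Set β)
    (hfin : ∀ i ∈ I, (f i).Finite)
    (hdisj : ∀ i ∈ I, ∀ j ∈ I, i ≠ j → Disjoint (f i) (f j)) :
    (⋃ i ∈ I, f i).ncard = ∑ i ∈ I, (f i).ncard := by
  classical
  induction I using Finset.induction_on with
  | empty => simp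
  | @insert x I hx ih =>
      rw [Finset.sum_insert hx]
      have hU : (⋃ i ∈ insert x I, f i) = f x ∪ ⋃ i ∈ I, f i := by
        simp [Set.biUnion_insert]
      have hd : Disjoint (f x) (⋃ i ∈ I, f i) := by
        apply Set.disjoint_left.mpr
        intro b hbx hbU
        obtain ⟨i, hi, hbi⟩ := Set.mem_iUnion₂.mp hbU
        exact (Set.disjoint_left.mp
          (hdisj x (Finset.mem_insert_self x I) i (Finset.mem_insert_of_mem hi)
            (by rintro rfl; exact hx hi)) hbx) hbi
      have hf2 : (⋃ i ∈ I, f i).Finite :=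
        Set.Finite.biUnion I.finite_toSet
          (fun i hi => hfin i (Finset.mem_insert_of_mem hi))
      rw [hU, Set.ncard_union_eq hd (hfin x (Finset.mem_insert_self x I)) hf2]
      rw [ih (fun i hi => hfin i (Finset.mem_insert_of_mem hi))
        (fun i hi j hj hne =>
          hdisj i (Finset.mem_insert_of_mem hi) j (Finset.mem_insert_of_mem hj) hne)]

lemma NSetN_finite (d m : ℕ) : (NSetN d m).Finite := by
  apply finite_of_spt (0 : ℕ) d (Set.Iic m) (Set.finite_Iic m)
  · rintro n ⟨hspt, hsum⟩ c
    by_cases hc : c ∈ Finset.Icc 1 d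
    · exact le_trans (Finset.single_le_sum (f := fun c => n c)
        (fun i _ => Nat.zero_le _) hc) hsum
    · rw [Finset.mem_Icc] at hc
      rw [hspt c (by omega)]
      exact Nat.zero_le m
  · rintro n ⟨hspt, _⟩ c hc
    exact hspt c hc

lemma NSetN_card (d m : ℕ) : (NSetN d m).ncard = (m + d).choose d := by
  classical
  induction d generalizing m with
  | zero =>
      have hset : NSetN 0 m = {fun _ => 0} := by
        apply Set.Subset.antisymm
        · rintro n ⟨hspt, _⟩
          funext c
          exact hspt c (by omega)
        · rintro n hn
          rw [Set.mem_singleton_iff] at hn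
          subst hn
          exact ⟨fun c _ => rfl, by simp⟩
      rw [hset, Set.ncard_singleton]
      simp
  | succ d ih =>
      have hval : ∀ n ∈ NSetN (d+1) m, n (d+1) ≤ m := by
        rintro n ⟨hspt, hsum⟩
        exact le_trans (Finset.single_le_sum (f := fun c => n c)
          (fun i _ => Nat.zero_le _) (Finset.mem_Icc.mpr ⟨by omega, le_rfl⟩)) hsum
      have hdecomp : NSetN (d+1) m =
          ⋃ v ∈ Finset.range (m+1), {n ∈ NSetN (d+1) m | n (d+1) = v} := by
        apply Set.Subset.antisymm
        · intro n hn
          exact Set.mem_biUnion (Finset.mem_range.mpr (by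
            have := hval n hn; omega)) ⟨hn, rfl⟩
        · intro n hn
          obtain ⟨v, _, hnv⟩ := Set.mem_iUnion₂.mp hn
          exact hnv.1
      have hfib : ∀ v, v ≤ m →
          ({n ∈ NSetN (d+1) m | n (d+1) = v} : Set (ℕ → ℕ)).ncard =
            (NSetN d (m - v)).ncard := by
        intro v hv
        rw [← Nat.card_coe_set_eq, ← Nat.card_coe_set_eq]
        apply Nat.card_congr
        refine ⟨fun n => ⟨Function.update n.1 (d+1) 0, ?_, ?_⟩,
                fun u => ⟨Function.update u.1 (d+1) v, ⟨⟨?_, ?_⟩, ?_⟩⟩, ?_, ?_⟩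
        · intro c hc
          by_cases hcd : c = d + 1
          · subst hcd; rw [Function.update_self]
          · rw [Function.update_of_ne hcd]
            exact n.2.1.1 c (by omega)
        · obtain ⟨⟨hspt, hsum⟩, hnv⟩ := n.2
          have hs2 : ∑ c ∈ Finset.Icc 1 (d+1), n.1 c =
              (∑ c ∈ Finset.Icc 1 d, n.1 c) + v := by
            rw [Finset.sum_Icc_succ_top (by omega), hnv]
          have he : ∑ c ∈ Finset.Icc 1 d, Function.update n.1 (d+1) 0 c =
              ∑ c ∈ Finset.Icc 1 d, n.1 c := by
            refine Finset.sum_congr rfl fun c hc => ?_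
            rw [Finset.mem_Icc] at hc
            rw [Function.update_of_ne (by omega)]
          rw [he]
          omega
        · intro c hc
          by_cases hcd : c = d + 1
          · omega
          · rw [Function.update_of_ne hcd]
            exact u.2.1 c (by omega)
        · have he : ∑ c ∈ Finset.Icc 1 (d+1), Function.update u.1 (d+1) v c =
              (∑ c ∈ Finset.Icc 1 d, u.1 c) + v := by
            rw [Finset.sum_Icc_succ_top (by omega), Function.update_self]
            congr 1
            refine Finset.sum_congr rfl fun c hc => ?_
            rw [Finset.mem_Icc] at hc
            rw [Function.update_of_ne (by omega)]
          rw [he]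
          have := u.2.2
          omega
        · rw [Function.update_self]
        · rintro ⟨n, ⟨⟨hspt, hsum⟩, hnv⟩⟩
          apply Subtype.ext
          show Function.update (Function.update n (d+1) 0) (d+1) v = n
          funext c
          by_cases hcd : c = d + 1
          · subst hcd
            rw [Function.update_self, hnv]
          · rw [Function.update_of_ne hcd, Function.update_of_ne hcd]
        · rintro ⟨u, ⟨hspt, hsum⟩⟩
          apply Subtype.ext
          show Function.update (Function.update u (d+1) v) (d+1) 0 = u
          funext c
          by_cases hcd : c = d + 1
          · subst hcd
            rw [Function.update_self, hspt (d+1) (by omega)]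
          · rw [Function.update_of_ne hcd, Function.update_of_ne hcd]
      rw [hdecomp, ncard_biUnion _ _ ?_ ?_]
      · have hterm : ∀ v ∈ Finset.range (m+1),
            ({n ∈ NSetN (d+1) m | n (d+1) = v} : Set (ℕ → ℕ)).ncard =
              ((m - v) + d).choose d := by
          intro v hv
          rw [Finset.mem_range] at hv
          rw [hfib v (by omega), ih (m - v)]
        rw [Finset.sum_congr rfl hterm]
        have hrefl : ∑ v ∈ Finset.range (m+1), ((m - v) + d).choose d =
            ∑ v ∈ Finset.range (m+1), (v + d).choose d := by
          rw [← Finset.sum_range_reflect]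
          refine Finset.sum_congr rfl fun v hv => ?_
          rw [Finset.mem_range] at hv
          congr 2
          omega
        rw [hrefl]
        have hIcc : ∑ v ∈ Finset.range (m+1), (v + d).choose d =
            ∑ q ∈ Finset.Icc d (d + m), q.choose d := by
          rw [show Finset.Icc d (d + m) = Finset.Icc (d + 0) (d + m) by norm_num,
            sum_shift (fun q => q.choose d) 0 m d]
          rw [show Finset.range (m+1) = Finset.Icc 0 m from by
            rw [← Finset.Ico_add_one_right_eq_Icc, Finset.range_eq_Ico]]
          refine Finset.sum_congr rfl fun v _ => ?_
          rw [Nat.add_comm]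
        rw [hIcc, Nat.sum_Icc_choose]
        congr 1
        omega
      · intro v _
        exact Set.Finite.subset (NSetN_finite (d+1) m) (fun n hn => hn.1)
      · intro v _ u _ hvu
        apply Set.disjoint_left.mpr
        rintro n ⟨_, hnv⟩ ⟨_, hnu⟩
        exact hvu (hnv ▸ hnu ▸ rfl)

lemma sum_split {M : Type*} [AddCommMonoid M] (hs : 1 ≤ s) (f : ℕ → M) :
    ∑ i ∈ Finset.Icc 1 s, f i = f 1 + ∑ i ∈ Finset.Icc 2 s, f i := by
  have he : (Finset.Icc 1 s).erase 1 = Finset.Icc 2 s := by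
    ext i
    simp only [Finset.mem_erase, Finset.mem_Icc]
    omega
  rw [← Finset.add_sum_erase (Finset.Icc 1 s) f (Finset.mem_Icc.mpr ⟨le_rfl, hs⟩), he]

lemma sum_split_at {M : Type*} [AddCommMonoid M] {a0 : ℕ} (h : a0 ≤ s) (ha0 : 1 ≤ a0)
    (f : ℕ → M) :
    ∑ i ∈ Finset.Icc a0 s, f i = f a0 + ∑ i ∈ Finset.Icc (a0 + 1) s, f i := by
  have he : (Finset.Icc a0 s).erase a0 = Finset.Icc (a0 + 1) s := by
    ext i
    simp only [Finset.mem_erase, Finset.mem_Icc]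
    omega
  rw [← Finset.add_sum_erase (Finset.Icc a0 s) f (Finset.mem_Icc.mpr ⟨le_rfl, h⟩), he]

lemma Fset_denom (hs : 1 ≤ s) (ha : 1 ≤ aa s a 1) (d : ℕ) {l : ℕ → ℝ}
    (hl : l ∈ Fset s a d) :
    ∀ k c, d ≤ c + k → 1 ≤ c → ∃ z : ℤ, l c * (aa s a 1 : ℝ) ^ (k + 1) = z := by
  obtain ⟨hspt, hb, hint⟩ := hl
  intro k
  induction k with
  | zero =>
      intro c hc h1
      rcases Nat.lt_or_ge d c with h | h
      · exact ⟨0, by rw [hspt c (Or.inr h)]; simp⟩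
      · obtain ⟨z, hz⟩ := hint (c - 1)
        refine ⟨z, ?_⟩
        rw [← hz, Yw_rightmost s a hs h1 (fun c' hc' => hspt c' (Or.inr (by omega)))]
        rw [pow_one]
        ring
  | succ k ih =>
      intro c hc h1
      by_cases hck : d ≤ c + k
      · obtain ⟨z, hz⟩ := ih c hck h1
        refine ⟨z * (aa s a 1 : ℤ), ?_⟩
        push_cast
        rw [pow_succ, ← mul_assoc, hz]
      · obtain ⟨y, hy⟩ := hint (c - 1)
        have hWex : ∀ i : ℕ, ∃ w : ℤ, ((2 ≤ i ∧ i ≤ s) →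
            (aa s a 1 : ℝ) ^ (k + 1) * l (c - 1 + i) = w) := by
          intro i
          by_cases h : 2 ≤ i ∧ i ≤ s
          · obtain ⟨z, hz⟩ := ih (c - 1 + i) (by omega) (by omega)
            exact ⟨z, fun _ => by rw [mul_comm]; exact hz⟩
          · exact ⟨0, fun hh => absurd hh h⟩
        choose W hW using hWex
        have hy2 : (y : ℝ) = (aa s a 1 : ℝ) * l c +
            ∑ i ∈ Finset.Icc 2 s, (aa s a i : ℝ) * l (c - 1 + i) := by
          rw [← hy, Yw, sum_split s hs (fun i => (aa s a i : ℝ) * l (c - 1 + i))]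
          rw [show c - 1 + 1 = c by omega]
        refine ⟨(aa s a 1 : ℤ) ^ (k + 1) * y -
          ∑ i ∈ Finset.Icc 2 s, (aa s a i : ℤ) * W i, ?_⟩
        push_cast
        rw [hy2]
        rw [mul_add, Finset.mul_sum]
        have hsum2 : ∑ i ∈ Finset.Icc 2 s,
            (aa s a 1 : ℝ) ^ (k + 1) * ((aa s a i : ℝ) * l (c - 1 + i)) =
            ∑ i ∈ Finset.Icc 2 s, (aa s a i : ℝ) * (W i : ℝ) := by
          refine Finset.sum_congr rfl fun i hi => ?_
          rw [Finset.mem_Icc] at hi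
          rw [show (aa s a 1 : ℝ) ^ (k+1) * ((aa s a i : ℝ) * l (c - 1 + i)) =
            (aa s a i : ℝ) * ((aa s a 1 : ℝ) ^ (k+1) * l (c - 1 + i)) by ring]
          rw [hW i ⟨hi.1, hi.2⟩]
        rw [hsum2]
        ring

lemma Fset_finite (hs : 1 ≤ s) (ha : 1 ≤ aa s a 1) (d : ℕ) : (Fset s a d).Finite := by
  set K : ℕ := (aa s a 1) ^ (d + 1) with hK
  have hK1 : 1 ≤ K := Nat.one_le_pow _ _ (by omega)
  have hKR : (0 : ℝ) < K := by exact_mod_cast hK1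
  apply finite_of_spt (0 : ℝ) d {x : ℝ | ∃ z : ℕ, z < K ∧ x = z / K} ?_ _ ?_ ?_
  · apply Set.Finite.subset (Set.Finite.image (fun z : ℕ => (z : ℝ) / K)
      (Set.finite_Iio K))
    rintro x ⟨z, hz, rfl⟩
    exact ⟨z, hz, rfl⟩
  · intro l hl c
    by_cases hc1 : 1 ≤ c ∧ c ≤ d
    · obtain ⟨z, hz⟩ := Fset_denom s a hs ha d hl d c (by omega) hc1.1
      have hb := hl.2.1 c
      have hKcast : ((K : ℕ) : ℝ) = (aa s a 1 : ℝ) ^ (d + 1) := by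
        rw [hK]; push_cast; ring
      have h0 : (0 : ℝ) ≤ z := by
        rw [← hz]
        apply mul_nonneg hb.1
        positivity
      have h1 : (z : ℝ) < K := by
        rw [← hz, hKcast]
        have := hb.2
        nlinarith [hb.1, pow_pos (show (0:ℝ) < (aa s a 1 : ℝ) by
          exact_mod_cast Nat.lt_of_lt_of_le Nat.zero_lt_one ha) (d+1)]
      have h0' : 0 ≤ z := by exact_mod_cast h0
      refine ⟨z.toNat, ?_, ?_⟩
      · have : (z : ℝ) < (K : ℝ) := h1
        have hzK : z < (K : ℤ) := by exact_mod_cast this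
        omega
      · rw [eq_div_iff (ne_of_gt hKR)]
        rw [show ((z.toNat : ℕ) : ℝ) = (z : ℝ) by
          rw [← Int.toNat_of_nonneg h0']; push_cast; rw [Int.toNat_of_nonneg h0']]
        rw [← hz, hKcast]
    · have hlc : l c = 0 := hl.1 c (by omega)
      exact ⟨0, by omega, by simp [hlc]⟩
  · intro f hf c hc
    exact hf.1 c hc

lemma sol_card (hs : 1 ≤ s) (ha : 1 ≤ aa s a 1) (d t : ℕ) :
    (Solset s a d t).ncard =
      ∑ l ∈ (Fset_finite s a hs ha d).toFinset,
        if mht d l ≤ t then (t - mht d l + d).choose d else 0 := by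
  classical
  set Ffin := (Fset_finite s a hs ha d).toFinset with hFfin
  set Part : (ℕ → ℝ) → Set (ℕ → ℝ) :=
    fun l => {μ | μ ∈ Solset s a d t ∧ (fun c => Int.fract (μ c)) = l} with hPart
  have hfracF : ∀ μ ∈ Solset s a d t, (fun c => Int.fract (μ c)) ∈ Fset s a d := by
    rintro μ ⟨hspt, hnn, hsum, hint⟩
    refine ⟨?_, ?_, ?_⟩
    · intro c hc
      show Int.fract (μ c) = 0
      rw [hspt c hc, Int.fract_zero]
    · exact fun c => ⟨Int.fract_nonneg _, Int.fract_lt_one _⟩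
    · intro p
      have hfr : (fun c => Int.fract (μ c)) = fun c => μ c - ((⌊μ c⌋ : ℤ) : ℝ) := by
        funext c
        rw [← Int.self_sub_floor]
      rw [hfr]
      have hYs : Yw s a (fun c => μ c - ((⌊μ c⌋ : ℤ) : ℝ)) p =
          Yw s a μ p - Yw s a (fun c => ((⌊μ c⌋ : ℤ) : ℝ)) p :=
        Yw_sub s a μ (fun c => ((⌊μ c⌋ : ℤ) : ℝ)) p
      rw [hYs]
      exact IsZ_sub (hint p) (Yw_int s a (fun c => ⌊μ c⌋) p)
  have hdecomp : Solset s a d t = ⋃ l ∈ Ffin, Part l := by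
    apply Set.Subset.antisymm
    · intro μ hμ
      exact Set.mem_biUnion ((Fset_finite s a hs ha d).mem_toFinset.mpr
        (hfracF μ hμ)) ⟨hμ, rfl⟩
    · intro μ hμ
      obtain ⟨l, _, hμl⟩ := Set.mem_iUnion₂.mp hμ
      exact hμl.1
  have hpartcard : ∀ l ∈ Ffin, (Part l).Finite ∧
      (Part l).ncard = if mht d l ≤ t then (t - mht d l + d).choose d else 0 := by
    intro l hlF
    have hlFs : l ∈ Fset s a d := (Fset_finite s a hs ha d).mem_toFinset.mp hlF
    obtain ⟨hlspt, hlb, hlint⟩ := hlFs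
    have hSl0 : (0:ℝ) ≤ ∑ c ∈ Finset.Icc 1 d, l c :=
      Finset.sum_nonneg fun c _ => (hlb c).1
    have hceil0 : (0:ℤ) ≤ ⌈∑ c ∈ Finset.Icc 1 d, l c⌉ := Int.ceil_nonneg hSl0
    by_cases hle : mht d l ≤ t
    · rw [if_pos hle]
      have hceilt : ⌈∑ c ∈ Finset.Icc 1 d, l c⌉ ≤ (t : ℤ) := by
        have : (⌈∑ c ∈ Finset.Icc 1 d, l c⌉).toNat ≤ t := hle
        omega
      have e : ↥(Part l) ≃ ↥(NSetN d (t - mht d l)) := by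
        refine ⟨fun μ => ⟨fun c => (⌊μ.1 c⌋).toNat, ?_, ?_⟩,
                fun n => ⟨fun c => l c + ((n.1 c : ℕ) : ℝ), ⟨⟨?_, ?_, ?_, ?_⟩, ?_⟩⟩,
                ?_, ?_⟩
        · -- spt of floor
          intro c hc
          show (⌊μ.1 c⌋).toNat = 0
          rw [μ.2.1.1 c hc]
          simp
        · -- sum bound of floors
          obtain ⟨⟨hspt, hnn, hsum, hint⟩, hfr⟩ := μ.2
          have hfl0 : ∀ c, (0:ℤ) ≤ ⌊μ.1 c⌋ := fun c => Int.floor_nonneg.mpr (hnn c)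
          have hflr : ∀ c, ((⌊μ.1 c⌋.toNat : ℕ) : ℝ) = μ.1 c - l c := by
            intro c
            have h1 : ((⌊μ.1 c⌋.toNat : ℕ) : ℝ) = ((⌊μ.1 c⌋ : ℤ) : ℝ) := by
              exact_mod_cast congrArg (fun z : ℤ => (z : ℝ))
                (Int.toNat_of_nonneg (hfl0 c))
            rw [h1, ← congrFun hfr c]
            show ((⌊μ.1 c⌋ : ℤ) : ℝ) = μ.1 c - Int.fract (μ.1 c)
            rw [Int.fract]
            ring
          have hSNr : ((∑ c ∈ Finset.Icc 1 d, ⌊μ.1 c⌋.toNat : ℕ) : ℝ) =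
              (∑ c ∈ Finset.Icc 1 d, μ.1 c) - ∑ c ∈ Finset.Icc 1 d, l c := by
            rw [Nat.cast_sum, Finset.sum_congr rfl (fun c _ => hflr c),
              Finset.sum_sub_distrib]
          have hkey : ((∑ c ∈ Finset.Icc 1 d, ⌊μ.1 c⌋.toNat : ℕ) : ℤ) +
              ⌈∑ c ∈ Finset.Icc 1 d, l c⌉ ≤ (t : ℤ) := by
            have h2 : ⌈(∑ c ∈ Finset.Icc 1 d, l c) +
                (((∑ c ∈ Finset.Icc 1 d, ⌊μ.1 c⌋.toNat : ℕ) : ℤ) : ℝ)⌉ ≤ (t : ℤ) := by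
              apply Int.ceil_le.mpr
              rw [Int.cast_natCast, hSNr, Int.cast_natCast]
              linarith [hsum]
            rw [Int.ceil_add_intCast] at h2
            omega
          show (∑ c ∈ Finset.Icc 1 d, ⌊μ.1 c⌋.toNat : ℕ) ≤ t - mht d l
          simp only [mht]
          omega
        · -- spt of l + n
          intro c hc
          show l c + ((n.1 c : ℕ) : ℝ) = 0
          rw [hlspt c hc, n.2.1 c hc]
          simp
        · -- nonneg
          intro c
          exact add_nonneg (hlb c).1 (by positivity)
        · -- sum ≤ t
          show (∑ c ∈ Finset.Icc 1 d, (l c + ((n.1 c : ℕ) : ℝ))) ≤ (t : ℝ)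
          rw [Finset.sum_add_distrib]
          have hln : (∑ c ∈ Finset.Icc 1 d, ((n.1 c : ℕ) : ℝ)) =
              ((∑ c ∈ Finset.Icc 1 d, n.1 c : ℕ) : ℝ) := by
            rw [Nat.cast_sum]
          have hnle : (∑ c ∈ Finset.Icc 1 d, n.1 c) ≤ t - mht d l := n.2.2
          have hlle : (∑ c ∈ Finset.Icc 1 d, l c) ≤
              ((⌈∑ c ∈ Finset.Icc 1 d, l c⌉ : ℤ) : ℝ) := Int.le_ceil _
          have hcast : ((∑ c ∈ Finset.Icc 1 d, n.1 c : ℕ) : ℝ) +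
              ((⌈∑ c ∈ Finset.Icc 1 d, l c⌉ : ℤ) : ℝ) ≤ (t : ℝ) := by
            have hints : ((∑ c ∈ Finset.Icc 1 d, n.1 c : ℕ) : ℤ) +
                ⌈∑ c ∈ Finset.Icc 1 d, l c⌉ ≤ (t : ℤ) := by
              have := hnle
              simp only [mht] at this
              omega
            exact_mod_cast hints
          rw [hln]
          linarith
        · -- windows
          intro p
          have hYa : Yw s a (fun c => l c + ((n.1 c : ℕ) : ℝ)) p =
              Yw s a l p + Yw s a (fun c => ((n.1 c : ℕ) : ℝ)) p :=
            Yw_add s a l (fun c => ((n.1 c : ℕ) : ℝ)) p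
          rw [hYa]
          exact IsZ_add (hlint p) (Yw_nat s a n.1 p)
        · -- fract of l + n
          funext c
          show Int.fract (l c + ((n.1 c : ℕ) : ℝ)) = l c
          rw [Int.fract_add_natCast, Int.fract_eq_self.mpr ⟨(hlb c).1, (hlb c).2⟩]
        · -- left inverse
          rintro ⟨μ, ⟨⟨hspt, hnn, hsum, hint⟩, hfr⟩⟩
          apply Subtype.ext
          show (fun c => l c + ((⌊μ c⌋.toNat : ℕ) : ℝ)) = μ
          funext c
          have hfl0 : (0:ℤ) ≤ ⌊μ c⌋ := Int.floor_nonneg.mpr (hnn c)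
          have h1 : ((⌊μ c⌋.toNat : ℕ) : ℝ) = ((⌊μ c⌋ : ℤ) : ℝ) := by
            exact_mod_cast congrArg (fun z : ℤ => (z : ℝ)) (Int.toNat_of_nonneg hfl0)
          rw [h1, ← congrFun hfr c]
          show Int.fract (μ c) + ((⌊μ c⌋ : ℤ) : ℝ) = μ c
          rw [Int.fract]
          ring
        · -- right inverse
          rintro ⟨n, ⟨hspt, hsum⟩⟩
          apply Subtype.ext
          show (fun c => (⌊l c + ((n c : ℕ) : ℝ)⌋).toNat) = n
          funext c
          rw [Int.floor_add_natCast, Int.floor_eq_zero_iff.mpr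
            (Set.mem_Ico.mpr ⟨(hlb c).1, (hlb c).2⟩)]
          simp
      constructor
      · rw [Set.finite_coe_iff.symm]
        exact e.finite_iff.mpr (Set.finite_coe_iff.mpr (NSetN_finite d (t - mht d l)))
      · rw [← Nat.card_coe_set_eq, Nat.card_congr e, Nat.card_coe_set_eq,
          NSetN_card]
    · rw [if_neg hle]
      have hempty : Part l = ∅ := by
        rw [Set.eq_empty_iff_forall_notMem]
        rintro μ ⟨⟨hspt, hnn, hsum, hint⟩, hfr⟩
        have hSlgt : (t : ℝ) < ∑ c ∈ Finset.Icc 1 d, l c := by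
          have h1 : (t : ℤ) < ⌈∑ c ∈ Finset.Icc 1 d, l c⌉ := by
            simp only [mht, not_le] at hle
            omega
          exact_mod_cast Int.lt_ceil.mp h1
        have hlμ : (∑ c ∈ Finset.Icc 1 d, l c) ≤ ∑ c ∈ Finset.Icc 1 d, μ c := by
          apply Finset.sum_le_sum
          intro c _
          rw [← congrFun hfr c]
          show Int.fract (μ c) ≤ μ c
          rw [Int.fract]
          have : (0:ℤ) ≤ ⌊μ c⌋ := Int.floor_nonneg.mpr (hnn c)
          have : (0:ℝ) ≤ ((⌊μ c⌋ : ℤ) : ℝ) := by exact_mod_cast this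
          linarith
        linarith
      rw [hempty]
      exact ⟨Set.finite_empty, Set.ncard_empty _⟩
  rw [hdecomp, ncard_biUnion Ffin Part (fun l hl => (hpartcard l hl).1) ?_]
  · exact Finset.sum_congr rfl fun l hl => (hpartcard l hl).2
  · intro l hl l' hl' hne
    apply Set.disjoint_left.mpr
    rintro μ ⟨_, hfr⟩ ⟨_, hfr'⟩
    exact hne (hfr ▸ hfr' ▸ rfl)

end Counting

section Series

open PowerSeries

lemma key (hs : 1 ≤ s) (ha : 1 ≤ aa s a 1) (d j : ℕ) :
    PowerSeries.coeff (R := ℤ) j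
        ((1 - PowerSeries.X : PowerSeries ℤ) ^ (d + 1) *
          ehrhartSeries (convexHull ℝ (Set.range (Wvert s a d)))) =
      ({l ∈ Fset s a d | mht d l = j} : Set (ℕ → ℝ)).ncard := by
  classical
  set Ffin := (Fset_finite s a hs ha d).toFinset with hFfin
  have hehr : ehrhartSeries (convexHull ℝ (Set.range (Wvert s a d))) =
      (∑ l ∈ Ffin, (PowerSeries.X : PowerSeries ℤ) ^ (mht d l)) *
        (PowerSeries.invOneSubPow ℤ (d + 1)).val := by
    apply PowerSeries.ext
    intro t
    rw [ehrhartSeries, PowerSeries.coeff_mk]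
    have hl1 : {x : Fin d → ℤ |
        (fun i => ((x i : ℝ))) ∈ (t : ℝ) • convexHull ℝ (Set.range (Wvert s a d))} =
        {x : Fin d → ℤ | (fun i => ((x i : ℝ))) ∈ Cset s a d (t : ℝ)} := by
      rw [hull_eq s a hs d, smul_Cset s a hs d t]
    rw [hl1, card_lat s a hs ha d t, sol_card s a hs ha d t]
    rw [PowerSeries.invOneSubPow_val_succ_eq_mk_add_choose]
    rw [Finset.sum_mul, map_sum]
    push_cast
    apply Finset.sum_congr rfl
    intro l _
    rw [PowerSeries.coeff_X_pow_mul', PowerSeries.coeff_mk]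
    split_ifs with h
    · push_cast
      rw [Nat.add_comm]
    · simp
  rw [hehr, ← mul_assoc, mul_comm ((1 - PowerSeries.X : PowerSeries ℤ) ^ (d + 1)) _,
    mul_assoc]
  have hone : (PowerSeries.invOneSubPow ℤ (d + 1)).val *
      (1 - PowerSeries.X : PowerSeries ℤ) ^ (d + 1) = 1 := by
    rw [← PowerSeries.invOneSubPow_inv_eq_one_sub_pow]
    exact (PowerSeries.invOneSubPow ℤ (d + 1)).val_inv
  rw [mul_comm ((1 - PowerSeries.X : PowerSeries ℤ) ^ (d + 1))
    (PowerSeries.invOneSubPow ℤ (d + 1)).val, hone, mul_one, map_sum]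
  have hco : ∀ l ∈ Ffin, (PowerSeries.coeff (R := ℤ) j) ((PowerSeries.X : PowerSeries ℤ) ^ mht d l) =
      if mht d l = j then 1 else 0 := by
    intro l _
    rw [PowerSeries.coeff_X_pow]
    simp [eq_comm]
  rw [Finset.sum_congr rfl hco, Finset.sum_boole]
  have hset : ({l ∈ Fset s a d | mht d l = j} : Set (ℕ → ℝ)) =
      ↑(Ffin.filter (fun l => mht d l = j)) := by
    ext l
    simp only [Set.mem_setOf_eq, Finset.coe_filter, hFfin, Set.Finite.mem_toFinset]
  rw [hset, Set.ncard_coe_finset]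

end Series

section Support

lemma support_bound (hs : 2 ≤ s) (ha : 2 ≤ aa s a 1)
    (hcop : Nat.Coprime (aa s a 1) (aa s a 2)) (d : ℕ) {l : ℕ → ℝ}
    (hl : l ∈ Fset s a d) :
    ∀ c, (∑ i ∈ Finset.Icc 1 s, aa s a i) * mht d l < c → l c = 0 := by
  classical
  intro c hc
  by_contra hlc
  obtain ⟨hspt, hb, hint⟩ := hl
  -- the largest index in the support
  set T := (Finset.Icc 1 d).filter (fun c => l c ≠ 0) with hT
  have hTne : T.Nonempty := by
    refine ⟨c, ?_⟩
    rw [hT, Finset.mem_filter, Finset.mem_Icc]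
    refine ⟨⟨by omega, ?_⟩, hlc⟩
    by_contra hgt
    exact hlc (hspt c (Or.inr (by omega)))
  set M := T.max' hTne with hMdef
  have hMT : M ∈ T := T.max'_mem hTne
  rw [hT, Finset.mem_filter, Finset.mem_Icc] at hMT
  obtain ⟨⟨hM1, hMd⟩, hMn⟩ := hMT
  have hMz : ∀ c', M < c' → l c' = 0 := by
    intro c' hc'
    by_cases hcd : c' ≤ d
    · by_contra hne2
      have hcT : c' ∈ T := by
        rw [hT, Finset.mem_filter, Finset.mem_Icc]
        exact ⟨⟨by omega, hcd⟩, hne2⟩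
      have := T.le_max' c' hcT
      omega
    · exact hspt c' (Or.inr (by omega))
  have hMc : c ≤ M := T.le_max' c (by
    rw [hT, Finset.mem_filter, Finset.mem_Icc]
    refine ⟨⟨by omega, ?_⟩, hlc⟩
    by_contra hgt
    exact hlc (hspt c (Or.inr (by omega))))
  have haR : (0:ℝ) < (aa s a 1 : ℝ) := by
    have : (0:ℕ) < aa s a 1 := by omega
    exact_mod_cast this
  -- Part 1 : propagation of non-integrality from the top of the support
  have prop : ∀ k, k < M → ∃ z : ℤ,
      (l (M - k) * (aa s a 1 : ℝ) ^ (k + 1) = z) ∧ ¬ ((aa s a 1 : ℤ) ∣ z) := by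
    intro k
    induction k using Nat.strong_induction_on with
    | _ k ih =>
      intro hkM
      rcases k with _ | k'
      · obtain ⟨y, hy⟩ := hint (M - 1)
        have hyr : (y : ℝ) = (aa s a 1 : ℝ) * l M := by
          rw [← hy, Yw_rightmost s a (by omega) hM1 hMz]
        have hlM0 : 0 < l M := lt_of_le_of_ne (hb M).1 (Ne.symm hMn)
        have hy0 : (0:ℝ) < (y:ℝ) := by rw [hyr]; positivity
        have hy1 : (y:ℝ) < (aa s a 1 : ℝ) := by
          rw [hyr]
          nlinarith [(hb M).2]
        have hy0' : 0 < y := by exact_mod_cast hy0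
        have hy1' : y < (aa s a 1 : ℤ) := by exact_mod_cast hy1
        refine ⟨y, ?_, ?_⟩
        · rw [Nat.sub_zero, zero_add, pow_one, hyr]
          ring
        · intro hdvd
          have := Int.le_of_dvd hy0' hdvd
          omega
      · set c0 := M - (k' + 1) with hc0
        have hc01 : 1 ≤ c0 := by omega
        obtain ⟨y, hy⟩ := hint (c0 - 1)
        obtain ⟨z2, hz2, hz2nd⟩ := ih k' (by omega) (by omega)
        have hWex : ∀ i, ∃ w : ℤ, ((3 ≤ i ∧ i ≤ s) →
            ((aa s a 1 : ℝ) ^ (k' + 1) * l (c0 - 1 + i) = w ∧ (aa s a 1 : ℤ) ∣ w)) := by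
          intro i
          by_cases hi : 3 ≤ i ∧ i ≤ s
          · by_cases hcM : M < c0 - 1 + i
            · exact ⟨0, fun _ => by rw [hMz _ hcM]; simp⟩
            · set u := M - (c0 - 1 + i) with hu
              have hui : u = k' + 2 - i := by omega
              obtain ⟨zu, hzu, _⟩ := ih u (by omega) (by omega)
              refine ⟨(aa s a 1 : ℤ) ^ (k' - u) * zu, fun _ => ⟨?_, ?_⟩⟩
              · have hidx : M - u = c0 - 1 + i := by omega
                rw [hidx] at hzu
                have hpow : (aa s a 1 : ℝ) ^ (k' + 1) =
                    (aa s a 1 : ℝ) ^ (k' - u) * (aa s a 1 : ℝ) ^ (u + 1) := by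
                  rw [← pow_add]
                  congr 1
                  omega
                push_cast
                rw [hpow]
                rw [show (aa s a 1 : ℝ) ^ (k' - u) * (aa s a 1 : ℝ) ^ (u + 1) *
                  l (c0 - 1 + i) = (aa s a 1 : ℝ) ^ (k' - u) *
                  (l (c0 - 1 + i) * (aa s a 1 : ℝ) ^ (u + 1)) by ring, hzu]
              · exact Dvd.dvd.mul_right (dvd_pow_self _ (by omega)) zu
          · exact ⟨0, fun hh => absurd hh hi⟩
        choose W hW using hWex
        have hidx2 : c0 + 1 = M - k' := by omega
        have hy2 : (y : ℝ) = (aa s a 1 : ℝ) * l c0 + (aa s a 2 : ℝ) * l (c0 + 1) +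
            ∑ i ∈ Finset.Icc 3 s, (aa s a i : ℝ) * l (c0 - 1 + i) := by
          rw [← hy, Yw, sum_split_at s (by omega) (by omega)
            (fun i => (aa s a i : ℝ) * l (c0 - 1 + i)),
            sum_split_at s hs (by omega) (fun i => (aa s a i : ℝ) * l (c0 - 1 + i))]
          rw [show c0 - 1 + 1 = c0 by omega, show c0 - 1 + 2 = c0 + 1 by omega]
          ring
        refine ⟨(aa s a 1 : ℤ) ^ (k' + 1) * y - (aa s a 2 : ℤ) * z2 -
          ∑ i ∈ Finset.Icc 3 s, (aa s a i : ℤ) * W i, ?_, ?_⟩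
        · push_cast
          rw [hy2, mul_add, mul_add, Finset.mul_sum]
          have hsum3 : ∑ i ∈ Finset.Icc 3 s,
              (aa s a 1 : ℝ) ^ (k' + 1) * ((aa s a i : ℝ) * l (c0 - 1 + i)) =
              ∑ i ∈ Finset.Icc 3 s, (aa s a i : ℝ) * (W i : ℝ) := by
            refine Finset.sum_congr rfl fun i hi => ?_
            rw [Finset.mem_Icc] at hi
            rw [show (aa s a 1 : ℝ) ^ (k' + 1) * ((aa s a i : ℝ) * l (c0 - 1 + i)) =
              (aa s a i : ℝ) * ((aa s a 1 : ℝ) ^ (k' + 1) * l (c0 - 1 + i)) by ring,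
              (hW i ⟨hi.1, hi.2⟩).1]
          rw [hsum3]
          have hz2' : (aa s a 1 : ℝ) ^ (k' + 1) * ((aa s a 2 : ℝ) * l (c0 + 1)) =
              (aa s a 2 : ℝ) * (z2 : ℝ) := by
            rw [hidx2]
            rw [show (aa s a 1 : ℝ) ^ (k' + 1) * ((aa s a 2 : ℝ) * l (M - k')) =
              (aa s a 2 : ℝ) * (l (M - k') * (aa s a 1 : ℝ) ^ (k' + 1)) by ring, hz2]
          rw [hz2']
          ring
        · intro hdvd
          have h3 : (aa s a 1 : ℤ) ∣ (aa s a 1 : ℤ) ^ (k' + 1) * y :=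
            Dvd.dvd.mul_right (dvd_pow_self _ (by omega)) y
          have h4 : (aa s a 1 : ℤ) ∣ ∑ i ∈ Finset.Icc 3 s, (aa s a i : ℤ) * W i := by
            apply Finset.dvd_sum
            intro i hi
            rw [Finset.mem_Icc] at hi
            exact Dvd.dvd.mul_left (hW i ⟨hi.1, hi.2⟩).2 _
          have h5 : (aa s a 1 : ℤ) ∣ (aa s a 2 : ℤ) * z2 := by
            have := dvd_sub (dvd_sub h3 hdvd) h4
            rw [show (aa s a 2 : ℤ) * z2 = (aa s a 1 : ℤ) ^ (k' + 1) * y - ((aa s a 1 : ℤ) ^ (k' + 1) * y - (aa s a 2 : ℤ) * z2 - ∑ i ∈ Finset.Icc 3 s, (aa s a i : ℤ) * W i) - ∑ i ∈ Finset.Icc 3 s, (aa s a i : ℤ) * W i by ring]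
            exact this
          have hco : IsCoprime (aa s a 1 : ℤ) (aa s a 2 : ℤ) :=
            Nat.isCoprime_iff_coprime.mpr hcop
          exact hz2nd (hco.dvd_of_dvd_mul_left h5)
  have hall : ∀ c', 1 ≤ c' → c' ≤ M → l c' ≠ 0 := by
    intro c' h1 h2
    obtain ⟨z, hz, hznd⟩ := prop (M - c') (by omega)
    rw [show M - (M - c') = c' by omega] at hz
    intro hl0
    rw [hl0, zero_mul] at hz
    exact hznd (by rw [show z = 0 from by exact_mod_cast hz.symm]; exact dvd_zero _)
  -- Part 2 : each window below M contributes at least 1 to the weighted sum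
  have hwin : ∀ p, p < M → (1:ℝ) ≤ Yw s a l p := by
    intro p hp
    obtain ⟨z, hz⟩ := hint p
    have hpos : (0:ℝ) < Yw s a l p := by
      have hterm : (aa s a 1 : ℝ) * l (p + 1) ≤ Yw s a l p := by
        apply Finset.single_le_sum (f := fun i => (aa s a i : ℝ) * l (p + i))
          (fun i _ => mul_nonneg (by positivity) (hb _).1)
          (Finset.mem_Icc.mpr ⟨le_rfl, by omega⟩)
      have h1p : 0 < l (p + 1) :=
        lt_of_le_of_ne (hb _).1 (Ne.symm (hall (p+1) (by omega) (by omega)))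
      nlinarith
    rw [hz] at hpos ⊢
    have : 0 < z := by exact_mod_cast hpos
    have : (1:ℤ) ≤ z := this
    exact_mod_cast this
  have hlower : (M : ℝ) ≤ ∑ p ∈ Finset.range M, Yw s a l p := by
    have := Finset.card_nsmul_le_sum (Finset.range M) (fun p => Yw s a l p) 1
      (fun p hp => hwin p (Finset.mem_range.mp hp))
    simpa using this
  have hS0 : (0:ℝ) ≤ ∑ c' ∈ Finset.Icc 1 d, l c' :=
    Finset.sum_nonneg fun c' _ => (hb c').1
  have hupper : ∑ p ∈ Finset.range M, Yw s a l p ≤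
      ((∑ i ∈ Finset.Icc 1 s, aa s a i : ℕ) : ℝ) * ∑ c' ∈ Finset.Icc 1 d, l c' := by
    unfold Yw
    rw [Finset.sum_comm]
    push_cast
    rw [Finset.sum_mul]
    apply Finset.sum_le_sum
    intro i hi
    rw [Finset.mem_Icc] at hi
    have hinner : ∑ p ∈ Finset.range M, l (p + i) ≤ ∑ c' ∈ Finset.Icc 1 d, l c' := by
      have he1 : ∑ p ∈ Finset.range M, l (p + i) = ∑ c' ∈ Finset.Icc i (i + (M-1)), l c' := by
        rw [show Finset.Icc i (i + (M-1)) = Finset.Icc (i+0) (i+(M-1)) from by norm_num,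
          sum_shift (fun c' => l c') 0 (M-1) i,
          show Finset.range M = Finset.Icc 0 (M-1) from by
            rw [← Finset.Ico_add_one_right_eq_Icc, Finset.range_eq_Ico]
            congr 1
            omega]
        refine Finset.sum_congr rfl fun p _ => ?_
        rw [Nat.add_comm]
      rw [he1]
      have he2 : ∑ c' ∈ Finset.Icc 1 d, l c' = ∑ c' ∈ Finset.Icc 1 (d + s), l c' := by
        apply Finset.sum_subset
        · intro c' hc'
          rw [Finset.mem_Icc] at hc' ⊢
          omega
        · intro c' hc1 hc2
          rw [Finset.mem_Icc] at hc1 hc2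
          exact hspt c' (by omega)
      rw [he2]
      apply Finset.sum_le_sum_of_subset_of_nonneg
      · intro c' hc'
        rw [Finset.mem_Icc] at hc' ⊢
        omega
      · intro c' _ _
        exact (hb c').1
    calc ∑ p ∈ Finset.range M, (aa s a i : ℝ) * l (p + i)
        = (aa s a i : ℝ) * ∑ p ∈ Finset.range M, l (p + i) := by
          rw [Finset.mul_sum]
      _ ≤ (aa s a i : ℝ) * ∑ c' ∈ Finset.Icc 1 d, l c' := by
          apply mul_le_mul_of_nonneg_left hinner (by positivity)
  have hSj : (∑ c' ∈ Finset.Icc 1 d, l c') ≤ (mht d l : ℝ) := by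
    have hceil : (∑ c' ∈ Finset.Icc 1 d, l c') ≤
        ((⌈∑ c' ∈ Finset.Icc 1 d, l c'⌉ : ℤ) : ℝ) := Int.le_ceil _
    have h0 : (0:ℤ) ≤ ⌈∑ c' ∈ Finset.Icc 1 d, l c'⌉ := Int.ceil_nonneg hS0
    have : ((mht d l : ℕ) : ℤ) = ⌈∑ c' ∈ Finset.Icc 1 d, l c'⌉ := by
      simp only [mht]
      omega
    calc (∑ c' ∈ Finset.Icc 1 d, l c')
        ≤ ((⌈∑ c' ∈ Finset.Icc 1 d, l c'⌉ : ℤ) : ℝ) := hceil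
      _ = ((mht d l : ℕ) : ℝ) := by exact_mod_cast congrArg (fun z : ℤ => (z:ℝ)) this.symm
  have hMle : (M : ℝ) ≤ ((∑ i ∈ Finset.Icc 1 s, aa s a i : ℕ) : ℝ) * (mht d l : ℝ) := by
    calc (M:ℝ) ≤ ∑ p ∈ Finset.range M, Yw s a l p := hlower
      _ ≤ ((∑ i ∈ Finset.Icc 1 s, aa s a i : ℕ) : ℝ) * ∑ c' ∈ Finset.Icc 1 d, l c' := hupper
      _ ≤ ((∑ i ∈ Finset.Icc 1 s, aa s a i : ℕ) : ℝ) * (mht d l : ℝ) := by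
          apply mul_le_mul_of_nonneg_left hSj (by positivity)
  have hMle' : M ≤ (∑ i ∈ Finset.Icc 1 s, aa s a i) * mht d l := by
    exact_mod_cast hMle
  omega

lemma stab_subset (hs : 2 ≤ s) (ha : 2 ≤ aa s a 1)
    (hcop : Nat.Coprime (aa s a 1) (aa s a 2)) (j d d' : ℕ)
    (hd : (∑ i ∈ Finset.Icc 1 s, aa s a i) * j ≤ d)
    (hd' : (∑ i ∈ Finset.Icc 1 s, aa s a i) * j ≤ d') :
    {l ∈ Fset s a d | mht d l = j} ⊆ {l ∈ Fset s a d' | mht d' l = j} := by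
  rintro l ⟨hlF, hlj⟩
  have hsupp : ∀ c, (∑ i ∈ Finset.Icc 1 s, aa s a i) * j < c → l c = 0 := by
    intro c hc
    apply support_bound s a hs ha hcop d hlF
    rw [hlj]
    exact hc
  obtain ⟨hspt, hb, hint⟩ := hlF
  have hsum : ∀ e : ℕ, (∑ i ∈ Finset.Icc 1 s, aa s a i) * j ≤ e →
      ∑ c ∈ Finset.Icc 1 e, l c =
        ∑ c ∈ Finset.Icc 1 ((∑ i ∈ Finset.Icc 1 s, aa s a i) * j), l c := by
    intro e he
    symm
    apply Finset.sum_subset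
    · intro c' hc'
      rw [Finset.mem_Icc] at hc' ⊢
      omega
    · intro c' hc1 hc2
      rw [Finset.mem_Icc] at hc1 hc2
      exact hsupp c' (by omega)
  refine ⟨⟨?_, hb, hint⟩, ?_⟩
  · intro c hc
    rcases hc with hc | hc
    · exact hspt c (Or.inl hc)
    · exact hsupp c (by omega)
  · simp only [mht] at hlj ⊢
    rw [hsum d' hd', ← hsum d hd]
    exact hlj

end Support

end MD

theorem stmt17 (s : ℕ) (hs : 2 ≤ s) (a : Fin s → ℕ)
    (hpos : ∀ i, 1 ≤ a i) (hmax : ∀ i : Fin s, i ≠ ⟨0, by omega⟩ → a i < a ⟨0, by omega⟩)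
    (hgcd : Nat.gcd (a ⟨0, by omega⟩) (a ⟨1, by omega⟩) = 1) (j : ℕ) :
    ∃ N : ℕ, s ≤ N ∧ ∀ d d' : ℕ, N ≤ d → N ≤ d' →
      PowerSeries.coeff (R := ℤ) j
        ((1 - PowerSeries.X : PowerSeries ℤ) ^ (d + 1) *
          ehrhartSeries (convexHull ℝ (Set.range (Wvert s a d)))) =
      PowerSeries.coeff (R := ℤ) j
        ((1 - PowerSeries.X : PowerSeries ℤ) ^ (d' + 1) *
          ehrhartSeries (convexHull ℝ (Set.range (Wvert s a d')))) := by
  classical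
  have hs1 : 1 ≤ s := by omega
  have ha1 : 2 ≤ MD.aa s a 1 := by
    rw [MD.aa_one s a hs1]
    have h1 := hmax ⟨1, by omega⟩ (by simp [Fin.ext_iff])
    have h2 := hpos ⟨1, by omega⟩
    omega
  have hcop : Nat.Coprime (MD.aa s a 1) (MD.aa s a 2) := by
    rw [MD.aa_one s a hs1, MD.aa_two s a hs]
    exact hgcd
  refine ⟨(∑ i ∈ Finset.Icc 1 s, MD.aa s a i) * j + s, by omega, fun d d' hd hd' => ?_⟩
  rw [MD.key s a hs1 (by omega) d j, MD.key s a hs1 (by omega) d' j]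
  congr 1
  have h1 := MD.stab_subset s a hs ha1 hcop j d d' (by omega) (by omega)
  have h2 := MD.stab_subset s a hs ha1 hcop j d' d (by omega) (by omega)
  rw [Set.Subset.antisymm h1 h2]
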